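/- arXiv:0809.4612 — 5 statements merged into one kernel-verified Lean document; each statement's English description precedes it below -/
import Mathlib

section
/- Let H > 0 and 0 < R ≤ π/H. Let l : [0,R] → ℝ be twice continuously differentiable with l(0) = 0, l'(0) = 2π, and l''(r) ≥ −H² l(r) for all r ∈ [0,R]. If there exists r₀ ∈ (0,R] with r₀ < π/H such that l(r₀) = (2π/H) sin(H r₀), then l(r) = (2π/H) sin(Hr) for all r ∈ [0, r₀]. -/
open Real

/-- Rigidity in the Sturm-type comparison: if `l` is C² with `l 0 = 0`,
`l' 0 = 2π` and `l'' ≥ −H² l` on `[0, R]` (`0 < R ≤ π/H`), and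
`l r₀ = (2π/H) sin (H r₀)` for some `r₀ ∈ (0, R]` with `r₀ < π/H`, then
`l r = (2π/H) sin (H r)` for all `r ∈ [0, r₀]`. -/
theorem length_lower_bound_rigidity
    (H R : ℝ) (hH : 0 < H) (hR : 0 < R) (hRH : R ≤ π / H)
    (l : ℝ → ℝ) (hl : ContDiff ℝ 2 l)
    (hl0 : l 0 = 0) (hl'0 : deriv l 0 = 2 * π)
    (hl'' : ∀ r ∈ Set.Icc (0:ℝ) R, deriv (deriv l) r ≥ -H ^ 2 * l r)
    (r₀ : ℝ) (hr₀ : r₀ ∈ Set.Ioc (0:ℝ) R) (hr₀' : r₀ < π / H)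
    (heq : l r₀ = (2 * π / H) * Real.sin (H * r₀)) :
    ∀ r ∈ Set.Icc (0:ℝ) r₀, l r = (2 * π / H) * Real.sin (H * r) := by
  obtain ⟨hr₀pos, hr₀R⟩ := hr₀
  have hHne : H ≠ 0 := ne_of_gt hH
  have hHr₀ : H * r₀ < π := by
    have := (lt_div_iff₀ hH).mp hr₀'
    linarith
  set s : ℝ → ℝ := fun r => (2 * π / H) * Real.sin (H * r) with hs_def
  -- derivatives of s
  have hs1 : ∀ r : ℝ, HasDerivAt s (2 * π * Real.cos (H * r)) r := by
    intro r
    have h1 : HasDerivAt (fun r : ℝ => Real.sin (H * r)) (Real.cos (H * r) * H) r := by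
      exact ((Real.hasDerivAt_sin (H * r)).comp r ((hasDerivAt_id r).const_mul H)).congr_deriv (by simp)
    have h2 := h1.const_mul (2 * π / H)
    refine h2.congr_deriv ?_
    rw [mul_comm (Real.cos _) H, ← mul_assoc, div_mul_cancel₀ _ hHne]
  have hs2 : ∀ r : ℝ, HasDerivAt (fun r : ℝ => 2 * π * Real.cos (H * r)) (-H ^ 2 * s r) r := by
    intro r
    have h1 : HasDerivAt (fun r : ℝ => Real.cos (H * r)) (-Real.sin (H * r) * H) r := by
      exact ((Real.hasDerivAt_cos (H * r)).comp r ((hasDerivAt_id r).const_mul H)).congr_deriv (by simp)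
    have h2 := h1.const_mul (2 * π)
    refine h2.congr_deriv ?_
    simp only [hs_def]
    field_simp
  have hs_cont : Continuous s := by
    simp only [hs_def]
    continuity
  -- regularity of l
  have hld : Differentiable ℝ l := hl.differentiable (by norm_num)
  have hl1 : ContDiff ℝ 1 (deriv l) := by
    have h2 : ContDiff ℝ ((1 : ℕ∞) + 1) l := hl.of_le (by norm_cast)
    exact_mod_cast (contDiff_succ_iff_deriv.mp h2).2.2
  have hld' : Differentiable ℝ (deriv l) := hl1.differentiable one_ne_zero
  -- sign of s on [0, r₀]
  have hs_nonneg : ∀ r ∈ Set.Icc (0:ℝ) r₀, 0 ≤ s r := by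
    intro r hr
    have h1 : 0 ≤ H * r := mul_nonneg hH.le hr.1
    have h2 : H * r ≤ π := by nlinarith [hr.2]
    have : 0 ≤ Real.sin (H * r) := Real.sin_nonneg_of_nonneg_of_le_pi h1 h2
    have hc : 0 ≤ 2 * π / H := by positivity
    exact mul_nonneg hc this
  have hs_pos : ∀ r : ℝ, 0 < r → r ≤ r₀ → 0 < s r := by
    intro r h0 h1
    have ha : 0 < H * r := mul_pos hH h0
    have hb : H * r < π := by nlinarith
    have : 0 < Real.sin (H * r) := Real.sin_pos_of_pos_of_lt_pi ha hb
    have hc : 0 < 2 * π / H := by positivity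
    exact mul_pos hc this
  -- the Wronskian
  set W : ℝ → ℝ := fun r => deriv l r * s r - l r * (2 * π * Real.cos (H * r)) with hW_def
  have hW : ∀ r : ℝ, HasDerivAt W ((deriv (deriv l) r + H ^ 2 * l r) * s r) r := by
    intro r
    have h1 : HasDerivAt (deriv l) (deriv (deriv l) r) r := (hld' r).hasDerivAt
    have h2 := (h1.mul (hs1 r)).sub (((hld r).hasDerivAt).mul (hs2 r))
    refine h2.congr_deriv ?_
    ring
  have hW0 : W 0 = 0 := by
    simp [hW_def, hs_def, hl0, hl'0]
  have hWmono : MonotoneOn W (Set.Icc (0:ℝ) r₀) := by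
    apply monotoneOn_of_deriv_nonneg (convex_Icc 0 r₀)
    · exact fun r _ => ((hW r).differentiableAt.continuousAt).continuousWithinAt
    · intro r _
      exact (hW r).differentiableAt.differentiableWithinAt
    · intro r hr
      rw [interior_Icc] at hr
      rw [(hW r).deriv]
      have hrIcc : r ∈ Set.Icc (0:ℝ) r₀ := ⟨hr.1.le, hr.2.le⟩
      have h1 : 0 ≤ deriv (deriv l) r + H ^ 2 * l r := by
        have := hl'' r ⟨hr.1.le, le_trans hr.2.le hr₀R⟩
        linarith
      exact mul_nonneg h1 (hs_nonneg r hrIcc)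
  have hWnn : ∀ r ∈ Set.Icc (0:ℝ) r₀, 0 ≤ W r := by
    intro r hr
    have := hWmono (Set.left_mem_Icc.mpr (by linarith [hr₀pos])) hr hr.1
    linarith [hW0]
  -- step 1 : l ≤ s on [0, r₀]
  have hle : ∀ r ∈ Set.Icc (0:ℝ) r₀, l r ≤ s r := by
    intro r hr
    rcases eq_or_lt_of_le hr.1 with h0 | h0
    · rw [← h0]
      simp [hl0, hs_def]
    rcases eq_or_lt_of_le hr.2 with h1 | h1
    · rw [h1, heq]
    -- ratio l/s is monotone on [r, r₀]
    have hsne : ∀ x ∈ Set.Icc r r₀, s x ≠ 0 := by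
      intro x hx
      exact ne_of_gt (hs_pos x (lt_of_lt_of_le h0 hx.1) hx.2)
    have hmono : MonotoneOn (fun x => l x / s x) (Set.Icc r r₀) := by
      apply monotoneOn_of_deriv_nonneg (convex_Icc r r₀)
      · exact ContinuousOn.div hld.continuous.continuousOn hs_cont.continuousOn hsne
      · intro x hx
        rw [interior_Icc] at hx
        have hxne : s x ≠ 0 := hsne x ⟨hx.1.le, hx.2.le⟩
        exact (((hld x).hasDerivAt).div (hs1 x) hxne).differentiableAt.differentiableWithinAt
      · intro x hx
        rw [interior_Icc] at hx
        have hxne : s x ≠ 0 := hsne x ⟨hx.1.le, hx.2.le⟩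
        rw [show deriv (fun x => l x / s x) x = _ from (((hld x).hasDerivAt).div (hs1 x) hxne).deriv]
        apply div_nonneg
        · exact hWnn x ⟨le_trans hr.1 hx.1.le, hx.2.le⟩
        · positivity
    have hkey := hmono (Set.left_mem_Icc.mpr hr.2) (Set.right_mem_Icc.mpr hr.2) hr.2
    simp only at hkey
    have hsr : 0 < s r := hs_pos r h0 hr.2
    have hsr₀ : s r₀ ≠ 0 := ne_of_gt (hs_pos r₀ (by linarith [hr₀pos]) le_rfl)
    rw [heq] at hkey
    have : (fun r => (2 * π / H) * Real.sin (H * r)) r₀ / s r₀ = 1 := by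
      rw [div_eq_one_iff_eq hsr₀]
    rw [show ((2 * π / H) * Real.sin (H * r₀)) / s r₀ = 1 from this] at hkey
    exact (div_le_one hsr).mp hkey
  -- step 2 : g := s' − l' is antitone, hence ≤ 0, hence s − l antitone, hence ≤ 0
  set g : ℝ → ℝ := fun x => 2 * π * Real.cos (H * x) - deriv l x with hg_def
  have hg : ∀ x : ℝ, HasDerivAt g (-H ^ 2 * s x - deriv (deriv l) x) x := by
    intro x
    exact (hs2 x).sub ((hld' x).hasDerivAt)
  have hg_anti : AntitoneOn g (Set.Icc (0:ℝ) r₀) := by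
    apply antitoneOn_of_deriv_nonpos (convex_Icc 0 r₀)
    · exact fun x _ => ((hg x).differentiableAt.continuousAt).continuousWithinAt
    · intro x hx
      exact (hg x).differentiableAt.differentiableWithinAt
    · intro x hx
      rw [interior_Icc] at hx
      rw [(hg x).deriv]
      have hxIcc : x ∈ Set.Icc (0:ℝ) r₀ := ⟨hx.1.le, hx.2.le⟩
      have h1 := hl'' x ⟨hx.1.le, le_trans hx.2.le hr₀R⟩
      have h2 := hle x hxIcc
      nlinarith [sq_nonneg H]
  have hg0 : g 0 = 0 := by
    simp [hg_def, hl'0]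
  have hg_np : ∀ x ∈ Set.Icc (0:ℝ) r₀, g x ≤ 0 := by
    intro x hx
    have := hg_anti (Set.left_mem_Icc.mpr (by linarith [hr₀pos])) hx hx.1
    linarith [hg0]
  have hh_anti : AntitoneOn (fun x => s x - l x) (Set.Icc (0:ℝ) r₀) := by
    apply antitoneOn_of_deriv_nonpos (convex_Icc 0 r₀)
    · exact (hs_cont.sub hld.continuous).continuousOn
    · intro x hx
      exact ((hs1 x).sub ((hld x).hasDerivAt)).differentiableAt.differentiableWithinAt
    · intro x hx
      rw [interior_Icc] at hx
      rw [show deriv (fun x => s x - l x) x = _ from ((hs1 x).sub ((hld x).hasDerivAt)).deriv]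
      exact hg_np x ⟨hx.1.le, hx.2.le⟩
  intro r hr
  have h1 := hh_anti (Set.left_mem_Icc.mpr (by linarith [hr₀pos])) hr hr.1
  have h2 : s 0 - l 0 = 0 := by simp [hs_def, hl0]
  have h3 := hle r hr
  have : l r = s r := by
    simp only at h1
    linarith
  rw [this]
end

section
/- Let H > 0 and 0 < R < π/H. Define η : [0,R] → ℝ by η(r) = cos(πr/(2R)) and define F(R) = (−(4H²R² − π²)² − (10π²H²R² − π⁴) cos(HR)) / (4H²R²(π² − H²R²)). Then ∫₀^R (4H² η(r)² − η'(r)² + 2(η²)''(r)) · (2π/H) sin(Hr) dr = 4π + π · F(R), where (η²)'' denotes the second derivative of the function r ↦ η(r)². -/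
open Real MeasureTheory intervalIntegral

/-- Evaluation of the stability integral on the test function
`η r = cos (π r / (2R))` against the comparison length `(2π/H) sin (H r)`:
it equals `4π + π F(R)` with the explicit rational function `F`. -/
theorem stability_integral_value
    (H R : ℝ) (hH : 0 < H) (hR : 0 < R) (hRH : R < π / H) :
    (∫ r in (0:ℝ)..R,
        (4 * H ^ 2 * (Real.cos (π * r / (2 * R))) ^ 2
          - (deriv (fun s => Real.cos (π * s / (2 * R))) r) ^ 2
          + 2 * deriv (deriv (fun s => (Real.cos (π * s / (2 * R))) ^ 2)) r)
        * ((2 * π / H) * Real.sin (H * r)))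
    = 4 * π + π *
        ((-(4 * H ^ 2 * R ^ 2 - π ^ 2) ^ 2
            - (10 * π ^ 2 * H ^ 2 * R ^ 2 - π ^ 4) * Real.cos (H * R))
          / (4 * H ^ 2 * R ^ 2 * (π ^ 2 - H ^ 2 * R ^ 2))) := by
  have hR0 : R ≠ 0 := hR.ne'
  have hH0 : H ≠ 0 := hH.ne'
  -- first derivative of η
  have hd1 : deriv (fun s : ℝ => Real.cos (π * s / (2 * R)))
      = fun r => -Real.sin (π * r / (2 * R)) * (π / (2 * R)) := by
    funext r
    have hlin : HasDerivAt (fun s : ℝ => π * s / (2 * R)) (π / (2 * R)) r := by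
      simpa using ((hasDerivAt_id r).const_mul π).div_const (2 * R)
    exact hlin.cos.deriv
  -- η² as a half-angle expression
  have hsq : (fun s : ℝ => (Real.cos (π * s / (2 * R))) ^ 2)
      = fun s : ℝ => 1 / 2 + Real.cos (π * s / R) / 2 := by
    funext s
    have h2 : 2 * (π * s / (2 * R)) = π * s / R := by field_simp
    rw [Real.cos_sq, h2]
  have hdc : ∀ r : ℝ, HasDerivAt (fun s : ℝ => 1 / 2 + Real.cos (π * s / R) / 2)
      (-Real.sin (π * r / R) * (π / R) / 2) r := by
    intro r
    have hlin : HasDerivAt (fun s : ℝ => π * s / R) (π / R) r := by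
      simpa using ((hasDerivAt_id r).const_mul π).div_const R
    simpa using (hlin.cos.div_const 2).const_add (1 / 2 : ℝ)
  have hd2a : deriv (fun s : ℝ => (Real.cos (π * s / (2 * R))) ^ 2)
      = fun r => -Real.sin (π * r / R) * (π / R) / 2 := by
    rw [hsq]; funext r; exact (hdc r).deriv
  -- second derivative of η²
  have hd2 : ∀ r : ℝ, deriv (deriv (fun s : ℝ => (Real.cos (π * s / (2 * R))) ^ 2)) r
      = -Real.cos (π * r / R) * (π / R) * (π / R) / 2 := by
    intro r
    rw [hd2a]
    have hlin : HasDerivAt (fun s : ℝ => π * s / R) (π / R) r := by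
      simpa using ((hasDerivAt_id r).const_mul π).div_const R
    have h : deriv (fun s : ℝ => -Real.sin (π * s / R) * (π / R) / 2) r
        = -(Real.cos (π * r / R) * (π / R)) * (π / R) / 2 :=
      ((hlin.sin.neg.mul_const (π / R)).div_const 2).deriv
    rw [show (fun s : ℝ => -Real.sin (π * s / R) * (π / R) / 2)
        = fun s : ℝ => (-Real.sin (π * s / R)) * (π / R) / 2 from rfl, h]
    ring
  simp only [hd1, hd2]
  -- nonvanishing facts
  have hHR : H * R < π := by
    have := (lt_div_iff₀ hH).mp hRH
    linarith
  have hd : H ^ 2 * R ^ 2 - π ^ 2 ≠ 0 := by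
    nlinarith [mul_pos hH hR]
  have hpi2 : π ^ 2 - H ^ 2 * R ^ 2 ≠ 0 := by
    nlinarith [mul_pos hH hR]
  have hsqmix : ∀ x : ℝ, Real.cos (π * x / (2 * R)) ^ 2 = 1 / 2 + Real.cos (π * x / R) / 2 := by
    intro s
    have h2 : 2 * (π * s / (2 * R)) = π * s / R := by field_simp
    rw [Real.cos_sq, h2]
  have hsinsq : ∀ x : ℝ, Real.sin (π * x / (2 * R)) ^ 2 = 1 / 2 - Real.cos (π * x / R) / 2 := by
    intro s
    rw [Real.sin_sq_eq_half_sub, show 2 * (π * s / (2 * R)) = π * s / R by field_simp]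
  have harg : ∀ x : ℝ, π / R * x = π * x / R := by intro x; ring
  set A : ℝ := 2 * H ^ 2 - π ^ 2 / (8 * R ^ 2) with hA
  set B : ℝ := 2 * H ^ 2 - 7 * π ^ 2 / (8 * R ^ 2) with hB
  -- explicit antiderivative of the integrand
  have key : ∀ r ∈ Set.uIcc (0:ℝ) R,
      HasDerivAt (fun r : ℝ => 2 * π / H *
          (A * (-Real.cos (H * r) / H)
            - B * ((H * R ^ 2 * Real.cos (H * r) * Real.cos (π / R * r)
                + π * R * Real.sin (H * r) * Real.sin (π / R * r)) / (H ^ 2 * R ^ 2 - π ^ 2))))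
        ((4 * H ^ 2 * Real.cos (π * r / (2 * R)) ^ 2 - (-Real.sin (π * r / (2 * R)) * (π / (2 * R))) ^ 2 +
          2 * (-Real.cos (π * r / R) * (π / R) * (π / R) / 2)) *
        (2 * π / H * Real.sin (H * r))) r := by
    intro r _
    have hlH : HasDerivAt (fun s : ℝ => H * s) H r := by
      simpa using (hasDerivAt_id r).const_mul H
    have hlc : HasDerivAt (fun s : ℝ => π / R * s) (π / R) r := by
      simpa using (hasDerivAt_id r).const_mul (π / R)
    have hG := ((((hlH.cos.neg.div_const H).const_mul A).sub
      (((((hlH.cos.const_mul (H * R ^ 2)).mul hlc.cos).add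
        ((hlH.sin.const_mul (π * R)).mul hlc.sin)).div_const
          (H ^ 2 * R ^ 2 - π ^ 2)).const_mul B)).const_mul (2 * π / H))
    refine hG.congr_deriv ?_
    symm
    rw [mul_pow, neg_sq, hsinsq r, hsqmix r, ← harg r, hA, hB]
    field_simp
    ring
  have hint : IntervalIntegrable (fun r : ℝ =>
      (4 * H ^ 2 * Real.cos (π * r / (2 * R)) ^ 2 - (-Real.sin (π * r / (2 * R)) * (π / (2 * R))) ^ 2 +
          2 * (-Real.cos (π * r / R) * (π / R) * (π / R) / 2)) *
        (2 * π / H * Real.sin (H * r))) volume 0 R := by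
    apply Continuous.intervalIntegrable
    fun_prop
  rw [intervalIntegral.integral_eq_sub_of_hasDerivAt key hint]
  have hcR : π / R * R = π := by field_simp
  rw [mul_zero, mul_zero, hcR, Real.cos_pi, Real.sin_pi, Real.cos_zero, Real.sin_zero, hA, hB]
  field_simp
  ring
end

section
/- Let H > 0 and define F(R) = (−(4H²R² − π²)² − (10π²H²R² − π⁴) cos(HR)) / (4H²R²(π² − H²R²)) for 0 < R < π/H. Then there exists ε > 0 such that F(R) > 0 for every R with π/(2H) < R < π/(2H) + ε. -/
open Real

lemma aux_num_pos (s : ℝ) (hs0 : 0 < s) (hs1 : s < 1 / 10) :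
    (4 * (π / 2 + s) ^ 2 - π ^ 2) ^ 2
      < (10 * π ^ 2 * (π / 2 + s) ^ 2 - π ^ 4) * Real.sin s := by
  have hπ1 : (3.141592 : ℝ) < π := Real.pi_gt_d6
  have hπ2 : π < 3.141593 := Real.pi_lt_d6
  have hp2 : (9.86 : ℝ) < π ^ 2 := by nlinarith
  have hp4 : (97 : ℝ) < π ^ 4 := by nlinarith [sq_nonneg (π ^ 2 - 9.86)]
  have hss : s * s < s / 10 := by nlinarith
  have hsin : s - s ^ 3 / 4 < Real.sin s :=
    by linarith [Real.sin_gt_sub_cube hs0, pow_pos hs0 3]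
  have hsin2 : (99 : ℝ) / 100 * s < Real.sin s := by nlinarith
  have hbig : (3 : ℝ) / 2 * π ^ 4 ≤ 10 * π ^ 2 * (π / 2 + s) ^ 2 - π ^ 4 := by
    nlinarith [mul_pos (mul_pos (mul_pos Real.pi_pos Real.pi_pos) Real.pi_pos) hs0,
      mul_pos (mul_pos Real.pi_pos Real.pi_pos) (mul_pos hs0 hs0)]
  have hprod : (3 / 2 * π ^ 4) * (99 / 100 * s)
      < (10 * π ^ 2 * (π / 2 + s) ^ 2 - π ^ 4) * Real.sin s := by
    apply mul_lt_mul' hbig hsin2 (by positivity)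
    nlinarith [hp4]
  have hlin : 4 * π * s + 4 * s ^ 2 ≤ 13 * s := by nlinarith
  have hlin0 : (0 : ℝ) ≤ 4 * π * s + 4 * s ^ 2 := by positivity
  calc (4 * (π / 2 + s) ^ 2 - π ^ 2) ^ 2 = (4 * π * s + 4 * s ^ 2) ^ 2 := by ring
    _ ≤ (13 * s) ^ 2 := by
        have := pow_le_pow_left₀ hlin0 hlin 2
        simpa using this
    _ = 169 * (s * s) := by ring
    _ < 169 * (s / 10) := by linarith
    _ < (3 / 2 * π ^ 4) * (99 / 100 * s) := by
        nlinarith [mul_pos hs0 (show (0 : ℝ) < π ^ 4 - 97 by linarith)]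
    _ < _ := hprod

/-- The function `F(R) = (−(4H²R² − π²)² − (10π²H²R² − π⁴) cos(HR)) /
(4H²R²(π² − H²R²))`, defined for `0 < R < π/H`, is strictly positive on some
interval `(π/(2H), π/(2H) + ε)`. -/
theorem F_positive_near_half_pi
    (H : ℝ) (hH : 0 < H) (F : ℝ → ℝ)
    (hF : ∀ R ∈ Set.Ioo (0:ℝ) (π / H),
      F R = (-(4 * H ^ 2 * R ^ 2 - π ^ 2) ^ 2
              - (10 * π ^ 2 * H ^ 2 * R ^ 2 - π ^ 4) * Real.cos (H * R))
            / (4 * H ^ 2 * R ^ 2 * (π ^ 2 - H ^ 2 * R ^ 2))) :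
    ∃ ε > 0, ∀ R : ℝ, π / (2 * H) < R → R < π / (2 * H) + ε → 0 < F R := by
  refine ⟨1 / (10 * H), by positivity, fun R h1 h2 => ?_⟩
  have hπ1 : (3.141592 : ℝ) < π := Real.pi_gt_d6
  have hπ2 : π < 3.141593 := Real.pi_lt_d6
  have ht1 : π / 2 < H * R := by
    have := (div_lt_iff₀ (by positivity : (0:ℝ) < 2 * H)).mp h1
    nlinarith
  have ht2 : H * R < π / 2 + 1 / 10 := by
    have h2' := mul_lt_mul_of_pos_left h2 hH
    have heq : H * (π / (2 * H) + 1 / (10 * H)) = π / 2 + 1 / 10 := by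
      field_simp
    linarith [heq ▸ h2']
  have hR0 : 0 < R := by nlinarith
  have hRπ : R < π / H := by
    rw [lt_div_iff₀ hH, mul_comm]
    nlinarith
  rw [hF R ⟨hR0, hRπ⟩]
  obtain ⟨s, hs0, hs1, htR⟩ : ∃ s, 0 < s ∧ s < 1 / 10 ∧ H * R = π / 2 + s :=
    ⟨H * R - π / 2, by linarith, by linarith, by ring⟩
  have hA : H ^ 2 * R ^ 2 = (π / 2 + s) ^ 2 := by rw [← htR]; ring
  have hcos : Real.cos (H * R) = -Real.sin s := by
    rw [htR, Real.cos_add, Real.cos_pi_div_two, Real.sin_pi_div_two]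
    ring
  apply div_pos
  · have h4 : 4 * H ^ 2 * R ^ 2 = 4 * (π / 2 + s) ^ 2 := by rw [← hA]; ring
    have h10 : 10 * π ^ 2 * H ^ 2 * R ^ 2 = 10 * π ^ 2 * (π / 2 + s) ^ 2 := by
      rw [← hA]; ring
    rw [hcos, h4, h10]
    linarith [aux_num_pos s hs0 hs1]
  · have hpos : 0 < 4 * H ^ 2 * R ^ 2 := by positivity
    have hHRπ : H * R < π := by linarith
    have hlt : H ^ 2 * R ^ 2 < π ^ 2 := by
      nlinarith [mul_pos (sub_pos.mpr hHRπ) (show (0:ℝ) < π + H * R by positivity)]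
    nlinarith [hpos, hlt]
end

section
/- Let H > 0. Then there exists ε > 0 with π/(2H) + ε < π/H such that for every R with π/(2H) < R < π/(2H) + ε, setting η(r) = cos(πr/(2R)), one has ∫₀^R (4H² η(r)² − η'(r)² + 2(η²)''(r)) · (2π/H) sin(Hr) dr > 4π, where (η²)'' denotes the second derivative of the function r ↦ η(r)². -/
open Real MeasureTheory intervalIntegral

lemma dcos_eq (b : ℝ) :
    deriv (fun s : ℝ => Real.cos (b * s)) = fun r => -b * Real.sin (b * r) := by
  funext r
  have h1 : HasDerivAt (fun s : ℝ => b * s) b r := by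
    simpa using (hasDerivAt_id r).const_mul b
  have h2 : HasDerivAt (fun s : ℝ => Real.cos (b * s)) (-Real.sin (b * r) * b) r :=
    (Real.hasDerivAt_cos (b * r)).comp r h1
  rw [h2.deriv]; ring

lemma dcossq1 (b : ℝ) :
    deriv (fun s : ℝ => Real.cos (b * s) ^ 2) = fun r => -b * Real.sin (2 * b * r) := by
  funext r
  have h1 : HasDerivAt (fun s : ℝ => b * s) b r := by
    simpa using (hasDerivAt_id r).const_mul b
  have h2 : HasDerivAt (fun s : ℝ => Real.cos (b * s)) (-Real.sin (b * r) * b) r :=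
    (Real.hasDerivAt_cos (b * r)).comp r h1
  have h3 : HasDerivAt (fun s : ℝ => Real.cos (b * s) ^ 2)
      ((2 : ℕ) * Real.cos (b * r) ^ (2 - 1) * (-Real.sin (b * r) * b)) r := h2.pow 2
  rw [h3.deriv, show (2:ℝ) * b * r = 2 * (b * r) by ring, Real.sin_two_mul]
  push_cast; ring

lemma dcossq (b : ℝ) :
    deriv (deriv (fun s : ℝ => Real.cos (b * s) ^ 2))
      = fun r => -2 * b ^ 2 * Real.cos (2 * b * r) := by
  rw [dcossq1]
  funext r
  have h1 : HasDerivAt (fun s : ℝ => 2 * b * s) (2 * b) r := by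
    simpa using (hasDerivAt_id r).const_mul (2 * b)
  have h2 : HasDerivAt (fun s : ℝ => Real.sin (2 * b * s)) (Real.cos (2 * b * r) * (2 * b)) r :=
    (Real.hasDerivAt_sin (2 * b * r)).comp r h1
  have h3 : HasDerivAt (fun s : ℝ => -b * Real.sin (2 * b * s))
      (-b * (Real.cos (2 * b * r) * (2 * b))) r := h2.const_mul (-b)
  rw [h3.deriv]; ring

lemma int_sin (k R : ℝ) (hk : k ≠ 0) :
    ∫ r in (0:ℝ)..R, Real.sin (k * r) = (1 - Real.cos (k * R)) / k := by
  have h : ∀ x ∈ Set.uIcc (0:ℝ) R,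
      HasDerivAt (fun r : ℝ => -(Real.cos (k * r) / k)) (Real.sin (k * x)) x := by
    intro x _
    have h1 : HasDerivAt (fun s : ℝ => k * s) k x := by
      simpa using (hasDerivAt_id x).const_mul k
    have h2 : HasDerivAt (fun s : ℝ => Real.cos (k * s)) (-Real.sin (k * x) * k) x :=
      (Real.hasDerivAt_cos (k * x)).comp x h1
    have h3 := (h2.div_const k).neg
    have h4 : HasDerivAt (fun r : ℝ => -(Real.cos (k * r) / k)) (-(-Real.sin (k * x) * k / k)) x := h3
    rwa [neg_mul, neg_div, neg_neg, mul_div_assoc, div_self hk, mul_one] at h4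
  rw [intervalIntegral.integral_eq_sub_of_hasDerivAt h
      ((Continuous.intervalIntegrable (by fun_prop) 0 R))]
  rw [mul_zero, Real.cos_zero]
  field_simp
  ring

lemma integrand_eq (H b r : ℝ) :
    (4 * H ^ 2 * (Real.cos (b * r)) ^ 2 - (-b * Real.sin (b * r)) ^ 2
        + 2 * (-2 * b ^ 2 * Real.cos (2 * b * r))) * ((2 * π / H) * Real.sin (H * r))
      = (2 * π / H * (2 * H ^ 2 - b ^ 2 / 2)) * Real.sin (H * r)
        + ((π / H * (2 * H ^ 2 - 7 * b ^ 2 / 2)) * Real.sin ((H + 2 * b) * r)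
          + (π / H * (2 * H ^ 2 - 7 * b ^ 2 / 2)) * Real.sin ((H - 2 * b) * r)) := by
  rw [show (H + 2 * b) * r = H * r + 2 * b * r by ring,
      show (H - 2 * b) * r = H * r - 2 * b * r by ring,
      Real.sin_add, Real.sin_sub,
      show (2:ℝ) * b * r = 2 * (b * r) by ring, Real.cos_two_mul, Real.sin_two_mul]
  linear_combination (-(2 * π / H) * b ^ 2 * Real.sin (H * r)) * Real.sin_sq_add_cos_sq (b * r)


set_option maxHeartbeats 1000000 in
lemma Fpos (d s : ℝ) (hd0 : 0 < d) (hd1 : d < 1/10) (hs1 : d - d ^ 3 / 4 < s) :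
    0 < π * (s * π ^ 2 * (10 * (d + π / 2) ^ 2 - π ^ 2)
        - (4 * (d + π / 2) ^ 2 - π ^ 2) ^ 2)
      / (4 * (d + π / 2) ^ 2 * (π ^ 2 - (d + π / 2) ^ 2)) := by
  have hπl := Real.pi_gt_d4
  have hπu := Real.pi_lt_d4
  have hπ2 : (9.86:ℝ) < π ^ 2 := by nlinarith
  have hπ2' : π ^ 2 < (9.88:ℝ) := by nlinarith
  have hs0 : (399/400) * d < s := by
    nlinarith [mul_nonneg hd0.le (by linarith : (0:ℝ) ≤ 1/10 - d),
      mul_nonneg (mul_nonneg hd0.le hd0.le) (by linarith : (0:ℝ) ≤ 1/10 - d)]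
  have hsd : 0 < s := by linarith
  have hdpi : 0 < d + π / 2 := by linarith
  apply div_pos
  · apply mul_pos Real.pi_pos
    have hX : (14.79:ℝ) ≤ 10 * (d + π / 2) ^ 2 - π ^ 2 := by
      nlinarith [sq_nonneg d, mul_pos hd0 Real.pi_pos]
    have hY : (4 * (d + π / 2) ^ 2 - π ^ 2) ^ 2 = 16 * d ^ 2 * (d + π) ^ 2 := by ring
    rw [hY]
    have hdπ : d + π < 3.25 := by linarith
    have hB : (d + π) ^ 2 < 10.5625 := by nlinarith
    have hC : 16 * d ^ 2 * (d + π) ^ 2 ≤ 169 * d ^ 2 := by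
      nlinarith [mul_nonneg (sq_nonneg d) (by linarith : (0:ℝ) ≤ 10.5625 - (d + π) ^ 2)]
    have hD : 169 * d ^ 2 ≤ (16.9:ℝ) * d := by
      nlinarith [mul_nonneg hd0.le (by linarith : (0:ℝ) ≤ 1/10 - d)]
    have hE1 : (9.86:ℝ) * 14.79 ≤ π ^ 2 * (10 * (d + π / 2) ^ 2 - π ^ 2) :=
      mul_le_mul hπ2.le hX (by norm_num) (sq_nonneg π)
    have hE2 : (399/400) * d * (9.86 * 14.79)
        ≤ s * (π ^ 2 * (10 * (d + π / 2) ^ 2 - π ^ 2)) :=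
      mul_le_mul hs0.le hE1 (by norm_num) hsd.le
    nlinarith [hE2, hC, hD, hd0]
  · apply mul_pos (by positivity : (0:ℝ) < 4 * (d + π / 2) ^ 2)
    nlinarith [mul_pos (by linarith : (0:ℝ) < π - (d + π / 2))
      (by linarith : (0:ℝ) < π + (d + π / 2))]

set_option maxHeartbeats 2000000 in
/-- Analytic core of the distance estimate: for `R` slightly larger than
`π/(2H)`, the stability integral of the test function `η r = cos (π r/(2R))`
against `(2π/H) sin (H r)` strictly exceeds `4π`. -/
theorem stability_integral_exceeds_four_pi
    (H : ℝ) (hH : 0 < H) :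
    ∃ ε > 0, π / (2 * H) + ε < π / H ∧
      ∀ R : ℝ, π / (2 * H) < R → R < π / (2 * H) + ε →
        (∫ r in (0:ℝ)..R,
            (4 * H ^ 2 * (Real.cos (π * r / (2 * R))) ^ 2
              - (deriv (fun s => Real.cos (π * s / (2 * R))) r) ^ 2
              + 2 * deriv (deriv (fun s => (Real.cos (π * s / (2 * R))) ^ 2)) r)
            * ((2 * π / H) * Real.sin (H * r)))
        > 4 * π := by
  refine ⟨1 / (10 * H), by positivity, ?_, ?_⟩
  · rw [div_add_div _ _ (by positivity : (2*H) ≠ 0) (by positivity : (10*H) ≠ 0),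
      div_lt_div_iff₀ (by positivity) (by positivity)]
    nlinarith [Real.pi_gt_three, mul_pos hH hH]
  intro R hR1 hR2
  have hR0 : 0 < R := lt_trans (by positivity) hR1
  have hd0 : 0 < H * R - π / 2 := by
    rw [div_lt_iff₀ (by positivity : (0:ℝ) < 2 * H)] at hR1
    nlinarith
  have hd1 : H * R - π / 2 < 1 / 10 := by
    have h1 := mul_lt_mul_of_pos_left hR2 hH
    have h2 : H * (π / (2 * H) + 1 / (10 * H)) = π / 2 + 1 / 10 := by
      field_simp
    rw [h2] at h1
    linarith
  have htπ : H * R < π := by nlinarith [Real.pi_gt_d4]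
  have hk2 : H + 2 * (π / (2 * R)) ≠ 0 := by positivity
  have hk3' : H - 2 * (π / (2 * R)) < 0 := by
    have h2b : 2 * (π / (2 * R)) = π / R := by field_simp
    rw [h2b, sub_neg, lt_div_iff₀ hR0]
    linarith
  have hk3 : H - 2 * (π / (2 * R)) ≠ 0 := hk3'.ne
  have hInt : (fun r => (4 * H ^ 2 * (Real.cos (π * r / (2 * R))) ^ 2
              - (deriv (fun s => Real.cos (π * s / (2 * R))) r) ^ 2
              + 2 * deriv (deriv (fun s => (Real.cos (π * s / (2 * R))) ^ 2)) r)
            * ((2 * π / H) * Real.sin (H * r)))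
      = fun r => (2 * π / H * (2 * H ^ 2 - (π / (2 * R)) ^ 2 / 2)) * Real.sin (H * r)
        + ((π / H * (2 * H ^ 2 - 7 * (π / (2 * R)) ^ 2 / 2)) * Real.sin ((H + 2 * (π / (2 * R))) * r)
          + (π / H * (2 * H ^ 2 - 7 * (π / (2 * R)) ^ 2 / 2)) * Real.sin ((H - 2 * (π / (2 * R))) * r)) := by
    have e1 : (fun s => Real.cos (π * s / (2 * R))) = fun s => Real.cos ((π / (2 * R)) * s) := by
      funext s; congr 1; ring
    have e2 : (fun s => (Real.cos (π * s / (2 * R))) ^ 2)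
        = fun s => Real.cos ((π / (2 * R)) * s) ^ 2 := by
      funext s
      rw [show π * s / (2 * R) = π / (2 * R) * s by ring]
    funext r
    rw [e1, e2, dcos_eq (π / (2 * R)), dcossq (π / (2 * R)),
      show π * r / (2 * R) = π / (2 * R) * r by ring]
    exact integrand_eq H (π / (2 * R)) r
  rw [hInt]
  have hi1 : IntervalIntegrable
      (fun r => (2 * π / H * (2 * H ^ 2 - (π / (2 * R)) ^ 2 / 2)) * Real.sin (H * r))
      volume 0 R := Continuous.intervalIntegrable (by fun_prop) 0 R
  have hi2 : IntervalIntegrable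
      (fun r => (π / H * (2 * H ^ 2 - 7 * (π / (2 * R)) ^ 2 / 2)) * Real.sin ((H + 2 * (π / (2 * R))) * r))
      volume 0 R := Continuous.intervalIntegrable (by fun_prop) 0 R
  have hi3 : IntervalIntegrable
      (fun r => (π / H * (2 * H ^ 2 - 7 * (π / (2 * R)) ^ 2 / 2)) * Real.sin ((H - 2 * (π / (2 * R))) * r))
      volume 0 R := Continuous.intervalIntegrable (by fun_prop) 0 R
  rw [intervalIntegral.integral_add hi1 (hi2.add hi3), intervalIntegral.integral_add hi2 hi3,
    intervalIntegral.integral_const_mul, intervalIntegral.integral_const_mul,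
    intervalIntegral.integral_const_mul,
    int_sin H R hH.ne', int_sin _ R hk2, int_sin _ R hk3,
    show (H + 2 * (π / (2 * R))) * R = H * R + π by field_simp,
    show (H - 2 * (π / (2 * R))) * R = H * R - π by field_simp,
    Real.cos_add_pi, Real.cos_sub_pi]
  have hcos : Real.cos (H * R) = -Real.sin (H * R - π / 2) := by
    have h0 := Real.cos_add_pi_div_two (H * R - π / 2)
    rwa [sub_add_cancel] at h0
  have h2b : 2 * (π / (2 * R)) = π / R := by field_simp
  have hk2R : H + π / R ≠ 0 := by positivity
  have hk3R : H - π / R ≠ 0 := by rw [← h2b]; exact hk3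
  have hsum : H * R + π ≠ 0 := by positivity
  have hdiff : H * R - π ≠ 0 := by
    have : 0 < H * R := by positivity
    intro hx; nlinarith [sub_eq_zero.mp hx]
  have hπt : π ^ 2 - (H * R) ^ 2 ≠ 0 := by nlinarith [mul_pos hH hR0]
  rw [hcos, h2b, gt_iff_lt, ← sub_pos]
  refine lt_of_lt_of_eq
    (b := π * (Real.sin (H * R - π / 2) * π ^ 2
          * (10 * ((H * R - π / 2) + π / 2) ^ 2 - π ^ 2)
        - (4 * ((H * R - π / 2) + π / 2) ^ 2 - π ^ 2) ^ 2)
      / (4 * ((H * R - π / 2) + π / 2) ^ 2 * (π ^ 2 - ((H * R - π / 2) + π / 2) ^ 2)))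
    ?_ ?_
  · exact Fpos (H * R - π / 2) (Real.sin (H * R - π / 2)) hd0 hd1
      (by have := Real.sin_gt_sub_cube hd0; nlinarith [pow_pos hd0 3])
  · field_simp [hk2R, hk3R, hsum, hdiff, hπt]
    rw [div_eq_iff (by intro h; apply hπt; ring_nf at h ⊢; linarith)]
    ring
end

section
/- Let H > 0 and R₀ > 0. Suppose l : [0, R₀] → ℝ is twice continuously differentiable with l(0) = 0, l'(0) = 2π, and l''(r) ≥ −H² l(r) for all r ∈ [0, R₀]. Suppose moreover that for every R ∈ (0, R₀] and every twice continuously differentiable η : [0,R] → ℝ with η(0) = 1 and η(R) = 0 one has ∫₀^R η'(r)² l(r) dr − 4H² ∫₀^R η(r)² l(r) dr − 2 ∫₀^R l''(r) η(r)² dr ≥ 0. Then R₀ ≤ π/(2H). -/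
set_option maxHeartbeats 1000000


open Real MeasureTheory intervalIntegral

/-- Sturm comparison: if `l'' ≥ -H² l` on `[0,R]` with `l 0 = 0`, `l' 0 = 2π`,
and `H*R < π`, then `l r ≥ (2π/H) sin (H r)` on `[0,R]`. -/
lemma sturm_lower_bound (H : ℝ) (hH : 0 < H) (l : ℝ → ℝ) (hl : ContDiff ℝ 2 l)
    (hl0 : l 0 = 0) (hl'0 : deriv l 0 = 2 * π)
    (R : ℝ) (hR : 0 < R) (hRπ : H * R < π)
    (hl'' : ∀ r ∈ Set.Icc (0:ℝ) R, deriv (deriv l) r ≥ -H ^ 2 * l r) :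
    ∀ r ∈ Set.Icc (0:ℝ) R, 2 * π / H * Real.sin (H * r) ≤ l r := by
  have hld : Differentiable ℝ l := hl.differentiable (by norm_num)
  have hl1 : ContDiff ℝ 1 (deriv l) := by
    have h2 : (2 : WithTop ℕ∞) = 1 + 1 := by norm_num
    rw [h2] at hl
    exact (contDiff_succ_iff_deriv.mp hl).2.2
  have hld' : Differentiable ℝ (deriv l) := hl1.differentiable one_ne_zero
  have hmul : ∀ x : ℝ, HasDerivAt (fun y => H * y) H x := fun x => by
    simpa using (hasDerivAt_id x).const_mul H
  have hsin : ∀ x : ℝ, HasDerivAt (fun y => Real.sin (H * y)) (Real.cos (H * x) * H) x :=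
    fun x => (Real.hasDerivAt_sin (H * x)).comp x (hmul x)
  have hcos : ∀ x : ℝ, HasDerivAt (fun y => Real.cos (H * y)) (-Real.sin (H * x) * H) x :=
    fun x => (Real.hasDerivAt_cos (H * x)).comp x (hmul x)
  -- the Wronskian
  set W : ℝ → ℝ := fun x => deriv l x * Real.sin (H * x) - H * (l x * Real.cos (H * x)) with hW
  have hWd : ∀ x : ℝ, HasDerivAt W
      ((deriv (deriv l) x + H ^ 2 * l x) * Real.sin (H * x)) x := by
    intro x
    have h1 := ((hld' x).hasDerivAt).mul (hsin x)
    have h2 := (((hld x).hasDerivAt).mul (hcos x)).const_mul H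
    convert h1.sub h2 using 1
    · rfl
    · rfl
    · rfl
    ring
  have hWmono : MonotoneOn W (Set.Icc 0 R) := by
    apply monotoneOn_of_deriv_nonneg (convex_Icc _ _)
    · exact Continuous.continuousOn (by fun_prop)
    · intro x _
      exact (hWd x).differentiableAt.differentiableWithinAt
    · intro x hx
      rw [interior_Icc] at hx
      rw [(hWd x).deriv]
      have hsx : 0 ≤ Real.sin (H * x) := by
        apply Real.sin_nonneg_of_nonneg_of_le_pi (mul_nonneg hH.le hx.1.le)
        nlinarith [hx.2]
      have := hl'' x ⟨hx.1.le, hx.2.le⟩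
      nlinarith
  have hW0 : W 0 = 0 := by simp [hW, hl0]
  have hWnn : ∀ x ∈ Set.Icc (0:ℝ) R, 0 ≤ W x := by
    intro x hx
    have := hWmono (Set.left_mem_Icc.mpr hR.le) hx hx.1
    linarith [hW0 ▸ this]
  intro r hr
  rcases eq_or_lt_of_le hr.1 with h0 | hrpos
  · rw [← h0]; simp [hl0]
  -- sin (H x) > 0 for x ∈ (0, R]
  have hsinpos : ∀ x : ℝ, 0 < x → x ≤ R → 0 < Real.sin (H * x) := by
    intro x hx1 hx2
    apply Real.sin_pos_of_pos_of_lt_pi (by positivity)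
    nlinarith
  set q : ℝ → ℝ := fun x => l x / Real.sin (H * x) with hq
  have claim : ∀ t ∈ Set.Ioc (0:ℝ) r, q t ≤ q r := by
    intro t ht
    have hmono : MonotoneOn q (Set.Icc t r) := by
      apply monotoneOn_of_deriv_nonneg (convex_Icc _ _)
      · apply ContinuousOn.div (hl.continuous.continuousOn)
          (Continuous.continuousOn (by fun_prop))
        intro x hx
        exact (hsinpos x (lt_of_lt_of_le ht.1 hx.1) (le_trans hx.2 hr.2)).ne'
      · intro x hx
        rw [interior_Icc] at hx
        have hne : Real.sin (H * x) ≠ 0 :=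
          (hsinpos x (lt_trans ht.1 hx.1) (le_trans hx.2.le hr.2)).ne'
        exact (((hld x).hasDerivAt).div (hsin x) hne).differentiableAt.differentiableWithinAt
      · intro x hx
        rw [interior_Icc] at hx
        have hne : Real.sin (H * x) ≠ 0 :=
          (hsinpos x (lt_trans ht.1 hx.1) (le_trans hx.2.le hr.2)).ne'
        have hdq := ((hld x).hasDerivAt).div (hsin x) hne
        rw [show deriv q x = _ from hdq.deriv]
        apply div_nonneg _ (sq_nonneg _)
        have hWx : 0 ≤ deriv l x * Real.sin (H * x) - H * (l x * Real.cos (H * x)) :=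
          hWnn x ⟨(lt_trans ht.1 hx.1).le, le_trans hx.2.le hr.2⟩
        nlinarith [hWx]
    exact hmono (Set.mem_Icc.mpr ⟨le_rfl, ht.2⟩) (Set.mem_Icc.mpr ⟨ht.2, le_rfl⟩) ht.2
  -- the limit of q at 0⁺ is 2π/H
  have hq_lim : Filter.Tendsto q (nhdsWithin 0 (Set.Ioi 0)) (nhds (2 * π / H)) := by
    have h1 : Filter.Tendsto (fun t => l t / t) (nhdsWithin 0 (Set.Ioi 0)) (nhds (2 * π)) := by
      have := hasDerivAt_iff_tendsto_slope.mp ((hld 0).hasDerivAt)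
      rw [hl'0] at this
      have h := this.mono_left (nhdsWithin_mono 0 (by intro x hx; simpa using (ne_of_gt hx)))
      apply h.congr'
      filter_upwards [self_mem_nhdsWithin] with t ht
      simp [slope_def_field, hl0]
    have h2 : Filter.Tendsto (fun t => Real.sin (H * t) / t)
        (nhdsWithin 0 (Set.Ioi 0)) (nhds H) := by
      have hd := hsin 0
      have := hasDerivAt_iff_tendsto_slope.mp hd
      simp only [mul_zero, Real.cos_zero, one_mul] at this
      have h := this.mono_left (nhdsWithin_mono 0 (by intro x hx; simpa using (ne_of_gt hx)))
      apply h.congr'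
      filter_upwards [self_mem_nhdsWithin] with t ht
      simp [slope_def_field]
    have h3 := h1.div h2 (ne_of_gt hH)
    apply h3.congr'
    filter_upwards [self_mem_nhdsWithin] with t ht
    have htne : (t:ℝ) ≠ 0 := (ne_of_gt ht)
    show l t / t / (Real.sin (H * t) / t) = q t
    rw [hq, div_div_div_comm, div_self htne, div_one]
  have hkey : 2 * π / H ≤ q r := by
    apply le_of_tendsto hq_lim
    filter_upwards [Ioc_mem_nhdsGT hrpos] with t ht using claim t ht
  have hsr : 0 < Real.sin (H * r) := hsinpos r hrpos hr.2
  rw [hq, le_div_iff₀ hsr] at hkey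
  linarith

/-- Abstract radial form of the main theorem: if `l` is C² with `l 0 = 0`,
`l' 0 = 2π`, `l'' ≥ −H² l` on `[0, R₀]`, and the radial stability inequality
`∫ η'² l − 4H² ∫ η² l − 2 ∫ l'' η² ≥ 0` holds for every `R ∈ (0, R₀]` and every
C² test function `η` with `η 0 = 1`, `η R = 0`, then `R₀ ≤ π/(2H)`. -/
theorem distance_estimate_radial
    (H R₀ : ℝ) (hH : 0 < H) (hR₀ : 0 < R₀)
    (l : ℝ → ℝ) (hl : ContDiff ℝ 2 l)
    (hl0 : l 0 = 0) (hl'0 : deriv l 0 = 2 * π)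
    (hl'' : ∀ r ∈ Set.Icc (0:ℝ) R₀, deriv (deriv l) r ≥ -H ^ 2 * l r)
    (hstab : ∀ R ∈ Set.Ioc (0:ℝ) R₀, ∀ η : ℝ → ℝ,
      ContDiff ℝ 2 η → η 0 = 1 → η R = 0 →
      (∫ r in (0:ℝ)..R, (deriv η r) ^ 2 * l r)
        - 4 * H ^ 2 * (∫ r in (0:ℝ)..R, (η r) ^ 2 * l r)
        - 2 * (∫ r in (0:ℝ)..R, deriv (deriv l) r * (η r) ^ 2) ≥ 0) :
    R₀ ≤ π / (2 * H) := by
  by_contra hcon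
  push_neg at hcon
  have hπ := Real.pi_pos
  set R : ℝ := min R₀ (3 * π / (4 * H)) with hRdef
  have hRpos : 0 < R := lt_min hR₀ (by positivity)
  have hRle : R ≤ R₀ := min_le_left _ _
  have hR2 : π / (2 * H) < R := by
    apply lt_min hcon
    rw [div_lt_div_iff₀ (by positivity) (by positivity)]
    nlinarith
  have hHR1 : π / 2 < H * R := by
    rw [div_lt_iff₀ (by positivity)] at hR2
    nlinarith
  have hHR2 : H * R ≤ 3 * π / 4 := by
    have := min_le_right R₀ (3 * π / (4 * H))
    rw [hRdef] at *
    rw [le_div_iff₀ (by positivity)] at this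
    nlinarith
  have hHRπ : H * R < π := by nlinarith
  set c : ℝ := Real.cos (H * R) with hcdef
  have hc : c < 0 := Real.cos_neg_of_pi_div_two_lt_of_lt hHR1 (by nlinarith)
  have hd : (0:ℝ) < 1 - c := by linarith
  -- the test function and its derivatives
  set η : ℝ → ℝ := fun r => (Real.cos (H * r) - c) / (1 - c) with hηdef
  set η₁ : ℝ → ℝ := fun r => -Real.sin (H * r) * H / (1 - c) with hη₁def
  set η₂ : ℝ → ℝ := fun r => -(Real.cos (H * r) * H) * H / (1 - c) with hη₂def
  have hmul : ∀ x : ℝ, HasDerivAt (fun y => H * y) H x := fun x => by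
    simpa using (hasDerivAt_id x).const_mul H
  have hsin : ∀ x : ℝ, HasDerivAt (fun y => Real.sin (H * y)) (Real.cos (H * x) * H) x :=
    fun x => (Real.hasDerivAt_sin (H * x)).comp x (hmul x)
  have hcos : ∀ x : ℝ, HasDerivAt (fun y => Real.cos (H * y)) (-Real.sin (H * x) * H) x :=
    fun x => (Real.hasDerivAt_cos (H * x)).comp x (hmul x)
  have hη₁ : ∀ x : ℝ, HasDerivAt η (η₁ x) x := fun x =>
    (((hcos x).sub_const c).div_const (1 - c))
  have hη₂ : ∀ x : ℝ, HasDerivAt η₁ (η₂ x) x := by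
    intro x
    have h := (((hsin x).neg).mul_const H).div_const (1 - c)
    convert h using 1
    · rfl
    · rfl
    rfl
  have hηc : ContDiff ℝ 2 η := by
    apply ContDiff.div_const
    exact (Real.contDiff_cos.comp (contDiff_const.mul contDiff_id)).sub contDiff_const
  have hη0 : η 0 = 1 := by
    simp [hηdef]
    exact hd.ne'
  have hηR : η R = 0 := by
    simp [hηdef]
    exact Or.inl (sub_eq_zero.mpr hcdef.symm)
  have hdη : deriv η = η₁ := funext fun x => (hη₁ x).deriv
  have hddη : deriv η₁ = η₂ := funext fun x => (hη₂ x).deriv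
  -- derivatives of l
  have hld : Differentiable ℝ l := hl.differentiable (by norm_num)
  have hl1 : ContDiff ℝ 1 (deriv l) := by
    have h2 : (2 : WithTop ℕ∞) = 1 + 1 := by norm_num
    rw [h2] at hl
    exact (contDiff_succ_iff_deriv.mp hl).2.2
  have hld' : Differentiable ℝ (deriv l) := hl1.differentiable one_ne_zero
  have hcl : Continuous l := hl.continuous
  have hcl' : Continuous (deriv l) := hl1.continuous
  have hcl'' : Continuous (deriv (deriv l)) := hl1.continuous_deriv le_rfl
  have hcη : Continuous η := by fun_prop
  have hcη₁ : Continuous η₁ := by fun_prop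
  have hcη₂ : Continuous η₂ := by fun_prop
  -- integration by parts (twice)
  have ibp1 : (∫ x in (0:ℝ)..R, (η x) ^ 2 * deriv (deriv l) x)
      = (η R) ^ 2 * deriv l R - (η 0) ^ 2 * deriv l 0
        - ∫ x in (0:ℝ)..R, (2 * (η x * η₁ x)) * deriv l x := by
    apply intervalIntegral.integral_mul_deriv_eq_deriv_mul
    · intro x _
      have := ((hη₁ x).mul (hη₁ x)).const_mul 1
      have h := (hη₁ x).mul (hη₁ x)
      have hsq : HasDerivAt (fun r => (η r) ^ 2) (2 * (η x * η₁ x)) x := by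
        have := (hη₁ x).pow 2
        convert this using 1
        · rfl
        · rfl
        · rfl
        ring
      exact hsq
    · exact fun x _ => (hld' x).hasDerivAt
    · exact (by fun_prop : Continuous fun x => 2 * (η x * η₁ x)).intervalIntegrable _ _
    · exact hcl''.intervalIntegrable _ _
  have ibp2 : (∫ x in (0:ℝ)..R, (2 * (η x * η₁ x)) * deriv l x)
      = (2 * (η R * η₁ R)) * l R - (2 * (η 0 * η₁ 0)) * l 0
        - ∫ x in (0:ℝ)..R, (2 * (η₁ x * η₁ x + η x * η₂ x)) * l x := by
    apply intervalIntegral.integral_mul_deriv_eq_deriv_mul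
    · intro x _
      exact ((hη₁ x).mul (hη₂ x)).const_mul 2
    · exact fun x _ => (hld x).hasDerivAt
    · exact (by fun_prop : Continuous fun x => 2 * (η₁ x * η₁ x + η x * η₂ x)).intervalIntegrable _ _
    · exact hcl'.intervalIntegrable _ _
  have keyC3 : (∫ x in (0:ℝ)..R, deriv (deriv l) x * (η x) ^ 2)
      = -(2 * π) + ∫ x in (0:ℝ)..R, (2 * (η₁ x * η₁ x + η x * η₂ x)) * l x := by
    have hcomm : (∫ x in (0:ℝ)..R, deriv (deriv l) x * (η x) ^ 2)
        = ∫ x in (0:ℝ)..R, (η x) ^ 2 * deriv (deriv l) x :=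
      integral_congr (fun x _ => mul_comm _ _)
    rw [hcomm, ibp1, ibp2, hηR, hη0, hl0, hl'0]
    simp [hη₁def]
  -- the combined inequality J ≤ 4π
  set Q : ℝ → ℝ := fun x => 3 * (η₁ x) ^ 2 + 4 * (η x * η₂ x) + 4 * H ^ 2 * (η x) ^ 2 with hQdef
  have hsb := hstab R ⟨hRpos, hRle⟩ η hηc hη0 hηR
  rw [hdη, keyC3] at hsb
  have hJsplit : (∫ x in (0:ℝ)..R, Q x * l x)
      = 4 * H ^ 2 * (∫ x in (0:ℝ)..R, (η x) ^ 2 * l x)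
        + 2 * (∫ x in (0:ℝ)..R, (2 * (η₁ x * η₁ x + η x * η₂ x)) * l x)
        - ∫ x in (0:ℝ)..R, (η₁ x) ^ 2 * l x := by
    rw [← intervalIntegral.integral_const_mul, ← intervalIntegral.integral_const_mul, ← intervalIntegral.integral_add
      ((by fun_prop : Continuous fun x => 4 * H ^ 2 * ((η x) ^ 2 * l x)).intervalIntegrable _ _)
      ((by fun_prop : Continuous fun x => 2 * ((2 * (η₁ x * η₁ x + η x * η₂ x)) * l x)).intervalIntegrable _ _),
      ← intervalIntegral.integral_sub
      ((by fun_prop : Continuous fun x => 4 * H ^ 2 * ((η x) ^ 2 * l x)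
        + 2 * ((2 * (η₁ x * η₁ x + η x * η₂ x)) * l x)).intervalIntegrable _ _)
      ((by fun_prop : Continuous fun x => (η₁ x) ^ 2 * l x).intervalIntegrable _ _)]
    apply integral_congr
    intro x _
    simp only [hQdef]
    ring
  have hJle : (∫ x in (0:ℝ)..R, Q x * l x) ≤ 4 * π := by
    rw [hJsplit]; linarith
  -- lower bound on l
  have hlow := sturm_lower_bound H hH l hl hl0 hl'0 R hRpos hHRπ
    (fun r hr => hl'' r ⟨hr.1, le_trans hr.2 hRle⟩)
  -- Q is nonnegative on [0,R]
  have hQnn : ∀ x ∈ Set.Icc (0:ℝ) R, 0 ≤ Q x := by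
    intro x hx
    have hkc : c ≤ Real.cos (H * x) := by
      rw [hcdef]
      exact Real.cos_le_cos_of_nonneg_of_le_pi (mul_nonneg hH.le hx.1) hHRπ.le
        (mul_le_mul_of_nonneg_left hx.2 hH.le)
    have hfac : 0 ≤ 3 * (Real.sin (H * x)) ^ 2 - 4 * c * Real.cos (H * x) + 4 * c ^ 2 := by
      nlinarith [sq_nonneg (Real.sin (H * x)), mul_nonneg (neg_nonneg.mpr hc.le)
        (sub_nonneg.mpr hkc)]
    have hQx : Q x = H ^ 2 / (1 - c) ^ 2
        * (3 * (Real.sin (H * x)) ^ 2 - 4 * c * Real.cos (H * x) + 4 * c ^ 2) := by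
      simp only [hQdef, hηdef, hη₁def, hη₂def]
      field_simp
      ring
    rw [hQx]
    exact mul_nonneg (by positivity) hfac
  have hQs : Q = fun x => H ^ 2 / (1 - c) ^ 2
      * (3 - 3 * (Real.cos (H * x)) ^ 2 - 4 * c * Real.cos (H * x) + 4 * c ^ 2) := by
    funext x
    have pyth := Real.sin_sq_add_cos_sq (H * x)
    simp only [hQdef, hηdef, hη₁def, hη₂def]
    field_simp
    linear_combination 3 * pyth
  -- exact computation of the comparison integral
  set F : ℝ → ℝ := fun r => 2 * π / (1 - c) ^ 2 * ((Real.cos (H * r)) ^ 3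
    + 2 * c * (Real.cos (H * r)) ^ 2 - (3 + 4 * c ^ 2) * Real.cos (H * r)) with hFdef
  have hFd : ∀ x ∈ Set.uIcc (0:ℝ) R, HasDerivAt F
      (Q x * (2 * π / H * Real.sin (H * x))) x := by
    intro x _
    have hk := hcos x
    have h := (((hk.pow 3).add ((hk.pow 2).const_mul (2 * c))).sub
      (hk.const_mul (3 + 4 * c ^ 2))).const_mul (2 * π / (1 - c) ^ 2)
    convert h using 1
    · rfl
    · rfl
    · rfl
    rw [hQs]
    have hHne : H ≠ 0 := hH.ne'
    field_simp
    ring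
  have hIval : (∫ x in (0:ℝ)..R, Q x * (2 * π / H * Real.sin (H * x))) = F R - F 0 := by
    apply integral_eq_sub_of_hasDerivAt hFd
    apply Continuous.intervalIntegrable
    rw [hQs]; fun_prop
  have hFval : F R - F 0 = 2 * π / (1 - c) ^ 2 * (2 - 5 * c + 4 * c ^ 2 - c ^ 3) := by
    simp only [hFdef, mul_zero, Real.cos_zero, ← hcdef]
    ring
  -- comparison of integrals
  have hcomp : (∫ x in (0:ℝ)..R, Q x * (2 * π / H * Real.sin (H * x)))
      ≤ ∫ x in (0:ℝ)..R, Q x * l x := by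
    apply integral_mono_on hRpos.le
    · apply Continuous.intervalIntegrable
      rw [hQs]; fun_prop
    · apply Continuous.intervalIntegrable
      rw [hQs]; fun_prop
    · intro x hx
      exact mul_le_mul_of_nonneg_left (hlow x hx) (hQnn x hx)
  -- contradiction
  have hfinal : 2 * π / (1 - c) ^ 2 * (2 - 5 * c + 4 * c ^ 2 - c ^ 3) ≤ 4 * π := by
    rw [← hFval, ← hIval]
    linarith
  have hd2 : (0:ℝ) < (1 - c) ^ 2 := by positivity
  rw [div_mul_eq_mul_div, div_le_iff₀ hd2] at hfinal
  nlinarith [mul_pos (mul_pos hπ (neg_pos.mpr hc)) hd2]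
end
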